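/- Let D be a finite three-dimensional diagram, ordered so that T_{(i,j,k)} > T_{(i',j',k')} iff (i,j,k) precedes (i',j',k') lexicographically, with the lexicographic monomial order on K[T_D]. Let u ∈ D and let D_u be the subdiagram of D obtained by removing all points lexicographically preceding u. Then J_D ∩ K[T_v : v ∈ D_u] = J_{D_u}, and the initial ideal satisfies in(J_D) ∩ K[T_v : v ∈ D_u] = in(J_{D_u}). -/

import Mathlib

open MvPolynomial

open scoped Classical

/-- Lattice points of `ℤ₊³`, equipped with the lexicographic (linear) order on
triples. -/
abbrev PtL : Type := ℕ ×ₗ (ℕ ×ₗ ℕ)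

/-- First coordinate of a point. -/
def c1 (v : PtL) : ℕ := (ofLex v).1

/-- Second coordinate of a point. -/
def c2 (v : PtL) : ℕ := (ofLex (ofLex v).2).1

/-- Third coordinate of a point. -/
def c3 (v : PtL) : ℕ := (ofLex (ofLex v).2).2

/-- The toric map sending `T_{(i,j,k)} ↦ x_i y_j z_k`. -/
noncomputable def toricMapL (K : Type*) [Field K] :
    MvPolynomial PtL K →ₐ[K] MvPolynomial (Fin 3 × ℕ) K :=
  aeval fun v => X (0, c1 v) * X (1, c2 v) * X (2, c3 v)

/-- The toric ideal `J_D` of a diagram `D`, as the set of polynomials supported on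
`D` that are killed by the toric map. -/
def JD (K : Type*) [Field K] (D : Finset PtL) : Set (MvPolynomial PtL K) :=
  {f | f ∈ supported K (↑D : Set PtL) ∧ toricMapL K f = 0}

/-- The initial ideal of a set of polynomials with respect to the lexicographic
monomial order in which `T_u > T_v` iff the triple `u` lexicographically precedes
the triple `v`: it is spanned by the monomials `T^m` such that `m` is the maximal
(with respect to the induced lexicographic order `Finsupp.Lex` on exponent vectors)
element of the support of some member of the set. -/
noncomputable def initialIdeal (K : Type*) [Field K] (J : Set (MvPolynomial PtL K)) :
    Ideal (MvPolynomial PtL K) :=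
  Ideal.span {g | ∃ f ∈ J, ∃ m : PtL →₀ ℕ,
    (f.support.image (fun e : PtL →₀ ℕ => toLex e)).max = ((toLex m : Lex (PtL →₀ ℕ)) : WithBot (Lex (PtL →₀ ℕ))) ∧
    g = monomial m 1}

section Aux

variable {K : Type*} [Field K]

/-- The set of leading exponents of a set of polynomials. -/
def leadSet (K : Type*) [Field K] (J : Set (MvPolynomial PtL K)) : Set (PtL →₀ ℕ) :=
  {m | ∃ f ∈ J, (f.support.image (fun e : PtL →₀ ℕ => toLex e)).max
      = ((toLex m : Lex (PtL →₀ ℕ)) : WithBot (Lex (PtL →₀ ℕ)))}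

theorem initialIdeal_eq_span (J : Set (MvPolynomial PtL K)) :
    initialIdeal K J
      = Ideal.span ((fun m : PtL →₀ ℕ => monomial m (1 : K)) '' leadSet K J) := by
  unfold initialIdeal
  congr 1
  ext g
  constructor
  · rintro ⟨f, hf, m, hm, rfl⟩
    exact ⟨m, ⟨f, hf, hm⟩, rfl⟩
  · rintro ⟨m, ⟨f, hf, hm⟩, rfl⟩
    exact ⟨f, hf, m, hm, rfl⟩

/-- Claim A: lex elimination.  If `f ∈ J_D` has leading exponent `m` supported in
`Du` (the set of points `≥ u`), then `f` itself is supported in `Du`. -/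
theorem claimA (D : Finset PtL) (u : PtL) (Du : Finset PtL)
    (hDu : Du = D.filter fun v => u ≤ v)
    (f : MvPolynomial PtL K) (hf : f ∈ JD K D) (m : PtL →₀ ℕ)
    (hm : (f.support.image (fun e : PtL →₀ ℕ => toLex e)).max
      = ((toLex m : Lex (PtL →₀ ℕ)) : WithBot (Lex (PtL →₀ ℕ))))
    (hms : (↑m.support : Set PtL) ⊆ ↑Du) : f ∈ JD K Du := by
  obtain ⟨hfD, hf0⟩ := hf
  -- every point in the support of `m` is `≥ u`
  have hmu : ∀ i, m i ≠ 0 → u ≤ i := by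
    intro i hi
    have : i ∈ Du := by exact_mod_cast hms (by simpa using Finsupp.mem_support_iff.2 hi)
    rw [hDu, Finset.mem_filter] at this
    exact this.2
  refine ⟨?_, hf0⟩
  rw [mem_supported] at hfD ⊢
  intro v hv
  obtain ⟨e, he, hve⟩ := (mem_vars v).1 (by exact_mod_cast hv)
  have hvD : v ∈ D := by
    have := hfD (by exact_mod_cast (mem_vars v).2 ⟨e, he, hve⟩)
    exact_mod_cast this
  have hev : e v ≠ 0 := Finsupp.mem_support_iff.1 hve
  -- show `u ≤ v`
  have huv : u ≤ v := by
    by_contra hvu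
    push_neg at hvu
    have hle : (toLex e : Lex (PtL →₀ ℕ)) ≤ toLex m := by
      have h1 : ((toLex e : Lex (PtL →₀ ℕ)) : WithBot (Lex (PtL →₀ ℕ)))
          ≤ (f.support.image (fun e : PtL →₀ ℕ => toLex e)).max :=
        Finset.le_max (Finset.mem_image_of_mem _ he)
      rw [hm] at h1
      exact_mod_cast h1
    rcases eq_or_lt_of_le hle with heq | hlt
    · have : e = m := congrArg ofLex heq
      exact absurd (hmu v (this ▸ hev)) (not_le.2 hvu)
    · obtain ⟨i, hji, hi⟩ := Finsupp.Lex.lt_iff.1 hlt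
      simp only [ofLex_toLex] at hji hi
      have hmi : m i ≠ 0 := by omega

      have hui : u ≤ i := hmu i hmi
      have hvi : v < i := lt_of_lt_of_le hvu hui
      have : e v = m v := hji v hvi
      exact absurd (hmu v (this ▸ hev)) (not_le.2 hvu)
  show v ∈ (↑Du : Set PtL)
  rw [hDu]
  exact_mod_cast Finset.mem_filter.2 ⟨hvD, huv⟩

end Aux

/-- for `D_u` the subdiagram obtained by removing from `D` all points
lexicographically preceding `u`, one has `J_D ∩ K[T_{D_u}] = J_{D_u}` and
`in(J_D) ∩ K[T_{D_u}] = in(J_{D_u})` (both intersections taken inside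
`K[T_{D_u}]`). -/
theorem stmt2 {K : Type*} [Field K] (D : Finset PtL) (u : PtL) (hu : u ∈ D)
    (Du : Finset PtL) (hDu : Du = D.filter fun v => u ≤ v) :
    JD K D ∩ (supported K (↑Du : Set PtL) : Set (MvPolynomial PtL K)) = JD K Du ∧
    ((initialIdeal K (JD K D) : Set (MvPolynomial PtL K)) ∩
        (supported K (↑Du : Set PtL) : Set (MvPolynomial PtL K)) =
      (initialIdeal K (JD K Du) : Set (MvPolynomial PtL K)) ∩
        (supported K (↑Du : Set PtL) : Set (MvPolynomial PtL K))) := by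
  have hsub : (↑Du : Set PtL) ⊆ ↑D := by
    rw [hDu]; exact_mod_cast Finset.filter_subset _ _
  have hJsub : JD K Du ⊆ JD K D := by
    rintro f ⟨hf1, hf2⟩
    exact ⟨supported_mono hsub hf1, hf2⟩
  constructor
  · ext f
    constructor
    · rintro ⟨⟨_, hf0⟩, hfDu⟩
      exact ⟨hfDu, hf0⟩
    · rintro ⟨hfDu, hf0⟩
      exact ⟨⟨supported_mono hsub hfDu, hf0⟩, hfDu⟩
  · ext x
    simp only [Set.mem_inter_iff, SetLike.mem_coe, initialIdeal_eq_span]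
    constructor
    · rintro ⟨hx, hxs⟩
      refine ⟨?_, hxs⟩
      rw [mem_ideal_span_monomial_image] at hx ⊢
      intro xi hxi
      obtain ⟨m, ⟨f, hf, hm⟩, hle⟩ := hx xi hxi
      have hxis : (↑xi.support : Set PtL) ⊆ ↑Du := by
        intro v hv
        have hv' : v ∈ xi.support := by exact_mod_cast hv
        exact (mem_supported.1 hxs) (by exact_mod_cast (mem_vars v).2 ⟨xi, hxi, hv'⟩)
      have hms : (↑m.support : Set PtL) ⊆ ↑Du := by
        intro v hv
        have hv' : v ∈ m.support := by exact_mod_cast hv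
        have : xi v ≠ 0 := by
          have h1 := Finsupp.mem_support_iff.1 hv'
          have h2 := hle v
          omega
        exact hxis (by exact_mod_cast Finsupp.mem_support_iff.2 this)
      exact ⟨m, ⟨f, claimA D u Du hDu f hf m hm hms, hm⟩, hle⟩
    · rintro ⟨hx, hxs⟩
      refine ⟨?_, hxs⟩
      refine Ideal.span_mono (Set.image_mono ?_) hx
      rintro m ⟨f, hf, hm⟩
      exact ⟨f, hJsub hf, hm⟩
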